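/- arXiv:2007.07641 — 2 statements merged into one kernel-verified Lean document; each statement's English description precedes it below -/
import Mathlib

section
/- Let m ≥ 1 and c be integers with 0 < c < m. As formal power series over ℤ, ∑_{j∈ℤ} (−1)^j X^{(m−c)·j(j+1)/2 + c·j(j−1)/2} = ∏_{k≥1} (1 − X^{mk−c})(1 − X^{mk−(m−c)})(1 − X^{mk}); note that (m−c)·j(j+1)/2 + c·j(j−1)/2 = (mj² + (m−2c)j)/2 is a nonnegative integer for every j ∈ ℤ. -/
open PowerSeries


noncomputable def iprod' (f : ℕ → PowerSeries ℤ) : PowerSeries ℤ :=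
  PowerSeries.mk fun n => PowerSeries.coeff n (∏ k ∈ Finset.range (n + 1), f k)

namespace JTP

/-- Gaussian binomial `[n; k]` in the variable `X^m`, as a power series over `ℤ`,
with `k : ℤ` (zero outside `0 ≤ k ≤ n`). -/
noncomputable def gb (m : ℕ) : ℕ → ℤ → PowerSeries ℤ
  | 0 => fun k => if k = 0 then 1 else 0
  | (n+1) => fun k => gb m n k + X ^ (m * (((n : ℤ) + 1 - k).toNat)) * gb m n (k - 1)

lemma gb_zero (m : ℕ) (k : ℤ) : gb m 0 k = if k = 0 then 1 else 0 := rfl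

lemma gb_succ (m n : ℕ) (k : ℤ) :
    gb m (n+1) k = gb m n k + X ^ (m * (((n : ℤ) + 1 - k).toNat)) * gb m n (k - 1) := rfl

lemma gb_neg (m : ℕ) (n : ℕ) : ∀ (k : ℤ), k < 0 → gb m n k = 0 := by
  induction n with
  | zero => intro k hk; simp [gb_zero, hk.ne]
  | succ n ih => intro k hk; rw [gb_succ, ih k hk, ih (k-1) (by omega)]; ring

lemma gb_gt (m : ℕ) (n : ℕ) : ∀ (k : ℤ), (n : ℤ) < k → gb m n k = 0 := by
  induction n with
  | zero => intro k hk; rw [gb_zero, if_neg (by omega)]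
  | succ n ih => intro k hk
                 rw [gb_succ, ih k (by push_cast at hk ⊢; omega),
                   ih (k-1) (by push_cast at hk ⊢; omega)]; ring

lemma gb_zero_iff (m : ℕ) (n : ℕ) (k : ℤ) (h : gb m n k ≠ 0) : 0 ≤ k ∧ k ≤ n := by
  constructor
  · by_contra hk; exact h (gb_neg m n k (by omega))
  · by_contra hk; exact h (gb_gt m n k (by omega))

lemma gb_k_zero (m n : ℕ) : gb m n 0 = 1 := by
  induction n with
  | zero => simp [gb_zero]
  | succ n ih => rw [gb_succ, ih, gb_neg m n (0-1) (by omega)]; ring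

lemma gb_self (m : ℕ) (n : ℕ) : gb m n (n : ℤ) = 1 := by
  induction n with
  | zero => simp [gb_zero]
  | succ n ih =>
      rw [gb_succ, gb_gt m n _ (by push_cast; omega)]
      push_cast
      rw [show ((n:ℤ) + 1 - ((n:ℤ)+1)) = 0 by ring, show ((n:ℤ) + 1 - 1) = (n:ℤ) by ring]
      simp [ih]

/-- the second Pascal recurrence -/
lemma gb_pascalB (m : ℕ) (n : ℕ) : ∀ (k : ℤ),
    gb m (n+1) k = gb m n (k - 1) + X ^ (m * k.toNat) * gb m n k := by
  induction n with
  | zero =>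
      intro k
      rcases eq_or_ne k 0 with rfl | h0
      · rw [gb_succ, gb_k_zero, gb_neg m 0 (0-1) (by omega)]
        simp [gb_zero]
      rcases eq_or_ne k 1 with rfl | h1
      · rw [gb_succ]; norm_num [gb_zero]
      · rw [gb_succ]
        simp only [gb_zero, if_neg h0, if_neg (by omega : k - 1 ≠ 0)]
        ring
  | succ n ih =>
      intro k
      have hA : gb m (n+1+1) k = gb m (n+1) k
          + X ^ (m * (((n:ℤ) + 2 - k).toNat)) * gb m (n+1) (k - 1) := by
        rw [gb_succ m (n+1) k, show ((((n:ℕ)+1:ℕ)):ℤ) + 1 - k = (n:ℤ) + 2 - k by push_cast; ring]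
      have hB := ih k
      have hC := ih (k-1)
      have hD := gb_succ m n k
      have hE : gb m (n+1) (k-1) = gb m n (k-1)
          + X ^ (m * (((n:ℤ) + 2 - k).toNat)) * gb m n (k - 1 - 1) := by
        rw [gb_succ m n (k-1), show ((n:ℤ)) + 1 - (k-1) = (n:ℤ) + 2 - k by ring]
      have hX2 : X ^ (m * (((n:ℤ) + 2 - k).toNat)) * X ^ (m * (k-1).toNat) * gb m n (k-1)
          = X ^ (m * k.toNat) * X ^ (m * (((n:ℤ) + 1 - k).toNat)) * gb m n (k-1) := by
        rcases eq_or_ne (gb m n (k-1)) 0 with hz | hz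
        · rw [hz]; ring
        · have hk := gb_zero_iff m n (k-1) hz
          rw [← pow_add, ← pow_add]
          have h2 : m * ((n:ℤ) + 2 - k).toNat + m * (k-1).toNat
              = m * k.toNat + m * ((n:ℤ) + 1 - k).toNat := by
            have h3 : ((n:ℤ) + 2 - k).toNat + (k-1).toNat
                = k.toNat + ((n:ℤ) + 1 - k).toNat := by omega
            calc m * ((n:ℤ) + 2 - k).toNat + m * (k-1).toNat
                = m * (((n:ℤ) + 2 - k).toNat + (k-1).toNat) := by ring
              _ = m * (k.toNat + ((n:ℤ) + 1 - k).toNat) := by rw [h3]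
              _ = _ := by ring
          rw [h2]
      linear_combination hA + hB
          + X ^ (m * (((n:ℤ) + 2 - k).toNat)) * hC - hE - X ^ (m * k.toNat) * hD + hX2

/-- partial product `(Q;Q)_t` with `Q = X^m` -/
noncomputable def F (m : ℕ) (t : ℕ) : PowerSeries ℤ :=
  ∏ i ∈ Finset.range t, (1 - X ^ (m * (i+1)))

lemma F_succ (m t : ℕ) : F m (t+1) = F m t * (1 - X ^ (m * (t+1))) :=
  Finset.prod_range_succ _ t

lemma F_zero (m : ℕ) : F m 0 = 1 := Finset.prod_range_zero _

lemma prodform (m : ℕ) : ∀ n (k : ℕ), k ≤ n →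
    gb m n (k : ℤ) * F m k * F m (n - k) = F m n := by
  intro n
  induction n with
  | zero => intro k hk
            have hk0 : k = 0 := by omega
            subst hk0; simp [gb_zero, F_zero]
  | succ n ih =>
      intro k hk
      rcases Nat.eq_zero_or_pos k with rfl | hk1
      · simp [gb_k_zero, F_zero]
      rcases eq_or_lt_of_le hk with heq | hklt
      · subst heq
        rw [gb_self m (n+1)]
        simp [F_zero]
      have hkn : k ≤ n := by omega
      have hgb : gb m (n+1) (k:ℤ) = gb m n (k:ℤ)
          + X ^ (m * (n+1-k)) * gb m n ((k-1 : ℕ) : ℤ) := by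
        rw [gb_succ m n (k:ℤ), show (((n:ℤ))+1-(k:ℤ)).toNat = n+1-k by omega,
          show (k:ℤ)-1 = ((k-1:ℕ):ℤ) by push_cast; omega]
      have hFk : F m k = F m (k-1) * (1 - X ^ (m * k)) := by
        conv_lhs => rw [show k = (k-1)+1 by omega]
        rw [F_succ, show k-1+1 = k by omega]
      have hF2 : F m (n+1-k) = F m (n-k) * (1 - X ^ (m * (n+1-k))) := by
        conv_lhs => rw [show n+1-k = (n-k)+1 by omega]
        rw [F_succ, show (n-k)+1 = n+1-k by omega]
      have IH1 := ih k hkn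
      have IH2 : gb m n ((k-1:ℕ):ℤ) * F m (k-1) * F m (n+1-k) = F m n := by
        rw [show n+1-k = n - (k-1) by omega]
        exact ih (k-1) (by omega)
      have hw : (X : PowerSeries ℤ) ^ (m*(n+1-k)) * X ^ (m*k) = X ^ (m*(n+1)) := by
        rw [← pow_add]
        congr 1
        rw [← Nat.left_distrib]
        congr 1
        omega
      rw [hgb]
      calc (gb m n (k:ℤ) + X ^ (m * (n+1-k)) * gb m n ((k-1:ℕ):ℤ)) * F m k * F m (n+1-k)
          = (gb m n (k:ℤ) * F m k * F m (n-k)) * (1 - X ^ (m*(n+1-k)))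
            + (X ^ (m*(n+1-k)) * (1 - X ^ (m*k)))
              * (gb m n ((k-1:ℕ):ℤ) * F m (k-1) * F m (n+1-k)) := by
            rw [hFk, hF2]; ring
        _ = F m n * (1 - X ^ (m*(n+1-k)))
            + (X ^ (m*(n+1-k)) * (1 - X ^ (m*k))) * F m n := by rw [IH1, IH2]
        _ = F m n * (1 - X ^ (m*(n+1-k)) * X ^ (m*k)) := by ring
        _ = F m (n+1) := by rw [hw, F_succ]

/-- product of factors `1 - X^(a i)` with all `a i ≥ d` is `1` modulo `X^d` -/
lemma prod_one_sub_dvd (d : ℕ) (s : Finset ℕ) (a : ℕ → ℕ) (h : ∀ i ∈ s, d ≤ a i) :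
    (X : PowerSeries ℤ) ^ d ∣ (∏ i ∈ s, (1 - X ^ (a i))) - 1 := by
  classical
  induction s using Finset.induction with
  | empty => simp
  | @insert i s his ih =>
      rw [Finset.prod_insert his]
      have h1 : (X : PowerSeries ℤ) ^ d ∣ (∏ i ∈ s, (1 - X ^ (a i))) - 1 :=
        ih (fun j hj => h j (Finset.mem_insert_of_mem hj))
      have h2 : (X : PowerSeries ℤ) ^ d ∣ (1 - X ^ (a i)) - 1 := by
        have : (1 - (X : PowerSeries ℤ) ^ (a i)) - 1 = -(X ^ (a i)) := by ring
        rw [this]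
        exact (dvd_neg).2 (pow_dvd_pow _ (h i (Finset.mem_insert_self i s)))
      have key : (1 - (X:PowerSeries ℤ) ^ (a i)) * (∏ i ∈ s, (1 - X ^ (a i))) - 1
          = (1 - X ^ (a i)) * ((∏ i ∈ s, (1 - X ^ (a i))) - 1) + ((1 - X ^ (a i)) - 1) := by
        ring
      rw [key]
      exact dvd_add (Dvd.dvd.mul_left h1 _) h2

lemma constantCoeff_F (m t : ℕ) (hm : 0 < m) : constantCoeff (F m t) = 1 := by
  rw [F, map_prod]
  apply Finset.prod_eq_one
  intro i _
  rw [map_sub, map_one, map_pow, constantCoeff_X, zero_pow (by positivity), sub_zero]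

lemma F_ne_zero (m t : ℕ) (hm : 0 < m) : F m t ≠ 0 := by
  intro h
  have := constantCoeff_F m t hm
  rw [h, map_zero] at this
  exact one_ne_zero this.symm

lemma Ico_prod_dvd (m : ℕ) (a b d : ℕ) (h : ∀ i ∈ Finset.Ico a b, d ≤ m * (i+1)) :
    (X : PowerSeries ℤ) ^ d ∣ (∏ i ∈ Finset.Ico a b, (1 - X ^ (m * (i+1)))) - 1 :=
  prod_one_sub_dvd d _ _ h

lemma gbF_dvd (m : ℕ) (hm : 0 < m) (N : ℕ) (j : ℤ) (hj : j.natAbs ≤ N) :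
    (X : PowerSeries ℤ) ^ (m * (N - j.natAbs + 1)) ∣
      gb m (2*N) ((N:ℤ) + j) * F m N - 1 := by
  set t := j.natAbs with ht
  set P := gb m (2*N) ((N:ℤ) + j) with hP
  have hprod : P * F m (N-t) * F m (N+t) = F m (2*N) := by
    rcases le_or_gt 0 j with hj0 | hj0
    · have hcast : (N:ℤ) + j = ((N + t : ℕ) : ℤ) := by
        push_cast; omega
      have h1 := prodform m (2*N) (N+t) (by omega)
      rw [show 2*N - (N+t) = N - t by omega] at h1
      rw [hP, hcast]
      calc gb m (2*N) ((N+t : ℕ):ℤ) * F m (N-t) * F m (N+t)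
          = gb m (2*N) ((N+t : ℕ):ℤ) * F m (N+t) * F m (N-t) := by ring
        _ = F m (2*N) := h1
    · have hcast : (N:ℤ) + j = ((N - t : ℕ) : ℤ) := by
        push_cast [Nat.cast_sub hj]; omega
      have h1 := prodform m (2*N) (N-t) (by omega)
      rw [show 2*N - (N-t) = N + t by omega] at h1
      rw [hP, hcast]
      exact h1
  have hFNt : F m (N+t) = F m N * ∏ i ∈ Finset.Ico N (N+t), (1 - X ^ (m * (i+1))) := by
    rw [F, F, Finset.prod_range_mul_prod_Ico _ (by omega : N ≤ N + t)]
  have hF2N : F m (2*N) = F m (N-t) * ∏ i ∈ Finset.Ico (N-t) (2*N), (1 - X ^ (m * (i+1))) := by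
    rw [F, F, Finset.prod_range_mul_prod_Ico _ (by omega : N - t ≤ 2*N)]
  set R1 := ∏ i ∈ Finset.Ico N (N+t), (1 - (X:PowerSeries ℤ) ^ (m * (i+1))) with hR1
  set R3 := ∏ i ∈ Finset.Ico (N-t) (2*N), (1 - (X:PowerSeries ℤ) ^ (m * (i+1))) with hR3
  have hcancel : P * F m N * R1 = R3 := by
    have hFne := F_ne_zero m (N-t) hm
    apply mul_right_cancel₀ hFne
    calc P * F m N * R1 * F m (N-t) = P * F m (N-t) * (F m N * R1) := by ring
      _ = P * F m (N-t) * F m (N+t) := by rw [← hFNt]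
      _ = F m (2*N) := hprod
      _ = F m (N-t) * R3 := hF2N
      _ = R3 * F m (N-t) := by ring
  set d := m * (N - t + 1) with hd
  have hdR1 : (X : PowerSeries ℤ) ^ d ∣ R1 - 1 := by
    apply Ico_prod_dvd
    intro i hi
    rw [Finset.mem_Ico] at hi
    exact Nat.mul_le_mul_left m (by omega)
  have hdR3 : (X : PowerSeries ℤ) ^ d ∣ R3 - 1 := by
    apply Ico_prod_dvd
    intro i hi
    rw [Finset.mem_Ico] at hi
    exact Nat.mul_le_mul_left m (by omega)
  have key : P * F m N - 1 = (R3 - 1) - (P * F m N) * (R1 - 1) := by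
    rw [← hcancel]; ring
  rw [key]
  exact dvd_sub hdR3 (Dvd.dvd.mul_left hdR1 _)

/-! ### exponents and signs -/

def eInt (m c : ℕ) (j : ℤ) : ℤ :=
  ((m:ℤ) - c) * (j * (j + 1) / 2) + (c:ℤ) * (j * (j - 1) / 2)

def E (m c : ℕ) (j : ℤ) : ℕ := (eInt m c j).toNat

noncomputable def eps (j : ℤ) : PowerSeries ℤ := if Even j then 1 else -1

lemma half1 (j : ℤ) : 2 * (j * (j + 1) / 2) = j * (j + 1) :=
  Int.mul_ediv_cancel' (Int.even_mul_succ_self j).two_dvd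

lemma half2 (j : ℤ) : 2 * (j * (j - 1) / 2) = j * (j - 1) := by
  have h : Even (j * (j - 1)) := by
    have := Int.even_mul_succ_self (j - 1)
    rw [show j - 1 + 1 = j by ring] at this
    rw [mul_comm]
    exact this
  exact Int.mul_ediv_cancel' h.two_dvd

lemma eInt_nonneg (m c : ℕ) (hcm : c < m) (j : ℤ) : 0 ≤ eInt m c j := by
  have h1 : 0 ≤ j * (j + 1) := by rcases le_or_gt 0 j with h | h <;> nlinarith
  have h2 : 0 ≤ j * (j - 1) := by rcases le_or_gt 0 j with h | h <;> nlinarith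
  have h3 : 0 ≤ j * (j + 1) / 2 := Int.ediv_nonneg h1 (by norm_num)
  have h4 : 0 ≤ j * (j - 1) / 2 := Int.ediv_nonneg h2 (by norm_num)
  have h5 : (0:ℤ) ≤ (m:ℤ) - c := by
    have : (c:ℤ) ≤ m := by exact_mod_cast hcm.le
    omega
  have h6 : (0:ℤ) ≤ (c:ℤ) := Int.natCast_nonneg c
  exact add_nonneg (mul_nonneg h5 h3) (mul_nonneg h6 h4)

lemma E_cast (m c : ℕ) (hcm : c < m) (j : ℤ) : ((E m c j : ℕ) : ℤ) = eInt m c j :=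
  Int.toNat_of_nonneg (eInt_nonneg m c hcm j)

lemma natAbs_le_eInt (m c : ℕ) (hc : 0 < c) (hcm : c < m) (j : ℤ) :
    (j.natAbs : ℤ) ≤ eInt m c j := by
  have h1 := half1 j
  have h2 := half2 j
  have hx : 2 * eInt m c j = ((m:ℤ) - c) * (j * (j + 1)) + (c:ℤ) * (j * (j - 1)) := by
    rw [eInt]
    linear_combination ((m:ℤ) - c) * h1 + (c:ℤ) * h2
  have ha : (1:ℤ) ≤ (m:ℤ) - c := by
    have : (c:ℤ) + 1 ≤ m := by exact_mod_cast hcm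
    omega
  have hb : (1:ℤ) ≤ (c:ℤ) := by exact_mod_cast hc
  have habs : ((j.natAbs : ℕ) : ℤ) = |j| := Int.abs_eq_natAbs j |>.symm
  rw [habs]
  rcases lt_trichotomy j 0 with h | rfl | h
  · rw [abs_of_neg h]
    have q1 : (0:ℤ) ≤ j*(j+1) := by nlinarith [mul_nonneg (by omega : (0:ℤ) ≤ -j) (by omega : (0:ℤ) ≤ -(j+1))]
    have q2 : (0:ℤ) ≤ j*(j-1) := by nlinarith [mul_nonneg (by omega : (0:ℤ) ≤ -j) (by omega : (0:ℤ) ≤ -(j-1))]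
    have w1 : (0:ℤ) ≤ ((m:ℤ)-c-1) * (j*(j+1)) := mul_nonneg (by linarith) q1
    have w2 : (0:ℤ) ≤ ((c:ℤ)-1) * (j*(j-1)) := mul_nonneg (by linarith) q2
    linarith [hx, w1, w2, q1]
  · norm_num [eInt]
  · rw [abs_of_pos h]
    have q1 : (0:ℤ) ≤ j*(j+1) := mul_nonneg (by omega) (by omega)
    have q2 : (0:ℤ) ≤ j*(j-1) := mul_nonneg (by omega) (by omega)
    have w1 : (0:ℤ) ≤ ((m:ℤ)-c-1) * (j*(j+1)) := mul_nonneg (by linarith) q1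
    have w2 : (0:ℤ) ≤ ((c:ℤ)-1) * (j*(j-1)) := mul_nonneg (by linarith) q2
    linarith [hx, w1, w2, q2]

lemma eInt_down (m c : ℕ) (j : ℤ) :
    eInt m c (j - 1) = eInt m c j - m * j + c := by
  have hx : 2 * eInt m c (j-1) = 2 * (eInt m c j - m * j + c) := by
    rw [eInt, eInt]
    linear_combination ((m:ℤ) - c) * half1 (j-1) + (c:ℤ) * half2 (j-1)
      - ((m:ℤ) - c) * half1 j - (c:ℤ) * half2 j
  omega

lemma eInt_up (m c : ℕ) (j : ℤ) :
    eInt m c (j + 1) = eInt m c j + m * (j + 1) - c := by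
  have h := eInt_down m c (j + 1)
  rw [show j + 1 - 1 = j by ring] at h
  omega

lemma eps_down (j : ℤ) : eps (j - 1) = - eps j := by
  rw [eps, eps]
  by_cases h : Even j
  · rw [if_pos h, if_neg (by rw [Int.even_sub_one]; exact not_not_intro h)]
  · rw [if_neg h, if_pos (Int.even_sub_one.mpr h)]
    ring

lemma eps_up (j : ℤ) : eps (j + 1) = - eps j := by
  have h := eps_down (j + 1)
  rw [show j + 1 - 1 = j by ring] at h
  rw [← neg_neg (eps (j+1)), h]

/-! ### the bilateral sum -/

noncomputable def term (m c N : ℕ) (j : ℤ) : PowerSeries ℤ :=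
  eps j * X ^ (E m c j) * gb m (2*N) ((N:ℤ) + j)

noncomputable def Pside (m c N : ℕ) : PowerSeries ℤ :=
  ∏ k ∈ Finset.range N, ((1 - X ^ (m*(k+1) - c)) * (1 - X ^ (m*(k+1) - (m-c))))

lemma term_vanish (m c N : ℕ) (j : ℤ) (hj : j ∉ Finset.Icc (-(N:ℤ)) (N:ℤ)) :
    term m c N j = 0 := by
  rw [Finset.mem_Icc] at hj
  push_neg at hj
  rcases lt_or_ge j (-(N:ℤ)) with h | h
  · rw [term, gb_neg m (2*N) _ (by omega), mul_zero]
  · rw [term, gb_gt m (2*N) _ (by push_cast; omega), mul_zero]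

lemma sum_term_ext (m c N : ℕ) (s : Finset ℤ) (hs : Finset.Icc (-(N:ℤ)) (N:ℤ) ⊆ s) :
    ∑ j ∈ s, term m c N j = ∑ j ∈ Finset.Icc (-(N:ℤ)) (N:ℤ), term m c N j :=
  (Finset.sum_subset hs (fun j _ hj => term_vanish m c N j hj)).symm

lemma sum_shift (a b d : ℤ) (f : ℤ → PowerSeries ℤ) :
    ∑ j ∈ Finset.Icc a b, f (j + d) = ∑ i ∈ Finset.Icc (a+d) (b+d), f i := by
  rw [← Finset.map_add_right_Icc a b d, Finset.sum_map]
  rfl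

lemma key (m c : ℕ) (hc : 0 < c) (hcm : c < m) :
    ∀ N, Pside m c N = ∑ j ∈ Finset.Icc (-(N:ℤ)) (N:ℤ), term m c N j := by
  intro N
  induction N with
  | zero =>
      rw [Pside, Finset.prod_range_zero]
      norm_num
      rw [term, E, eInt]
      norm_num [gb_k_zero, eps]
  | succ N ih =>
      have hcast : ((N+1:ℕ):ℤ) = (N:ℤ)+1 := by push_cast; ring
      -- pointwise expansion of the (N+1)-st term
      have hsplit : ∀ j : ℤ, term m c (N+1) j
          = term m c N j
            + eps j * X ^ (E m c j) *
                (X ^ (m * (((N:ℤ)+1+j).toNat)) * gb m (2*N) ((N:ℤ)+(j+1)))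
            + eps j * X ^ (E m c j) *
                (X ^ (m * (((N:ℤ)+1-j).toNat)) * gb m (2*N) ((N:ℤ)+(j-1)))
            + eps j * X ^ (E m c j) *
                (X ^ (m * (((N:ℤ)+1-j).toNat)) *
                  (X ^ (m * (((N:ℤ)+j).toNat)) * gb m (2*N) ((N:ℤ)+j))) := by
        intro j
        rw [term, term, hcast, show 2*(N+1) = (2*N)+1+1 by omega]
        rw [gb_succ m (2*N+1) ((N:ℤ)+1+j)]
        rw [show ((2*N+1:ℕ):ℤ) + 1 - ((N:ℤ)+1+j) = (N:ℤ)+1-j by push_cast; ring]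
        rw [show (N:ℤ)+1+j - 1 = (N:ℤ)+j by ring]
        rw [gb_pascalB m (2*N) ((N:ℤ)+1+j)]
        rw [show (N:ℤ)+1+j - 1 = (N:ℤ)+j by ring]
        rw [gb_pascalB m (2*N) ((N:ℤ)+j)]
        rw [show (N:ℤ)+j - 1 = (N:ℤ)+(j-1) by ring]
        rw [show (N:ℤ)+1+j = (N:ℤ)+(j+1) by ring]
        ring
      rw [hcast]
      rw [Finset.sum_congr rfl (fun j _ => hsplit j),
        Finset.sum_add_distrib, Finset.sum_add_distrib, Finset.sum_add_distrib]
      -- Sum 1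
      have hsum1 : ∑ j ∈ Finset.Icc (-((N:ℤ)+1)) ((N:ℤ)+1), term m c N j = Pside m c N := by
        rw [sum_term_ext m c N _ (Finset.Icc_subset_Icc (by omega) (by omega)), ← ih]
      -- Sum 2
      have e2 : ∀ j : ℤ, eps j * X ^ (E m c j) *
            (X ^ (m * (((N:ℤ)+1+j).toNat)) * gb m (2*N) ((N:ℤ)+(j+1)))
          = (fun i => eps (i-1) * X ^ (E m c (i-1)) *
              (X ^ (m * (((N:ℤ)+i).toNat)) * gb m (2*N) ((N:ℤ)+i))) (j + 1) := by
        intro j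
        simp only
        rw [show j+1-1 = j by ring, show (N:ℤ)+(j+1) = (N:ℤ)+1+j by ring]
      have h2' : ∀ i : ℤ, eps (i-1) * X ^ (E m c (i-1)) *
            (X ^ (m * (((N:ℤ)+i).toNat)) * gb m (2*N) ((N:ℤ)+i))
          = -(X ^ (m*N+c)) * term m c N i := by
        intro i
        rcases eq_or_ne (gb m (2*N) ((N:ℤ)+i)) 0 with hz | hz
        · rw [term, hz]; ring
        · have hb := gb_zero_iff m (2*N) _ hz
          have hb2 : -(N:ℤ) ≤ i ∧ i ≤ (N:ℤ) := by
            constructor <;> [skip; skip] <;> (push_cast at hb; omega)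
          have hNi : ((((N:ℤ)+i).toNat : ℕ) : ℤ) = (N:ℤ)+i := Int.toNat_of_nonneg (by omega)
          have hgoal : E m c (i-1) + m * (((N:ℤ)+i).toNat) = E m c i + (m*N + c) := by
            have hcast2 : ((E m c (i-1) + m * (((N:ℤ)+i).toNat) : ℕ) : ℤ)
                = ((E m c i + (m*N + c) : ℕ) : ℤ) := by
              push_cast [E_cast m c hcm, hNi]
              rw [eInt_down]
              push_cast
              ring
            exact_mod_cast hcast2
          calc eps (i-1) * X ^ (E m c (i-1)) *
                (X ^ (m * (((N:ℤ)+i).toNat)) * gb m (2*N) ((N:ℤ)+i))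
              = -(X ^ (E m c (i-1) + m * (((N:ℤ)+i).toNat)) * (eps i * gb m (2*N) ((N:ℤ)+i))) := by
                rw [eps_down, pow_add]; ring
            _ = -(X ^ (E m c i + (m*N+c)) * (eps i * gb m (2*N) ((N:ℤ)+i))) := by rw [hgoal]
            _ = -(X ^ (m*N+c)) * term m c N i := by rw [term, pow_add]; ring
      have hsum2 : ∑ j ∈ Finset.Icc (-((N:ℤ)+1)) ((N:ℤ)+1),
            eps j * X ^ (E m c j) *
              (X ^ (m * (((N:ℤ)+1+j).toNat)) * gb m (2*N) ((N:ℤ)+(j+1)))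
          = -(X ^ (m*N+c)) * Pside m c N := by
        rw [Finset.sum_congr rfl (fun j _ => e2 j),
          show -((N:ℤ)+1) = -(N:ℤ)-1 by ring,
          sum_shift (-(N:ℤ)-1) ((N:ℤ)+1) 1 (fun i => eps (i-1) * X ^ (E m c (i-1)) *
              (X ^ (m * (((N:ℤ)+i).toNat)) * gb m (2*N) ((N:ℤ)+i)))]
        rw [show -(N:ℤ)-1+1 = -(N:ℤ) by ring, show (N:ℤ)+1+1 = (N:ℤ)+2 by ring]
        rw [Finset.sum_congr rfl (fun i _ => h2' i), ← Finset.mul_sum]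
        rw [sum_term_ext m c N _ (Finset.Icc_subset_Icc (by omega) (by omega)), ← ih]
      -- Sum 3
      have e3 : ∀ j : ℤ, eps j * X ^ (E m c j) *
            (X ^ (m * (((N:ℤ)+1-j).toNat)) * gb m (2*N) ((N:ℤ)+(j-1)))
          = (fun i => eps (i+1) * X ^ (E m c (i+1)) *
              (X ^ (m * (((N:ℤ)-i).toNat)) * gb m (2*N) ((N:ℤ)+i))) (j + (-1)) := by
        intro j
        simp only
        rw [show j+(-1)+1 = j by ring, show (N:ℤ)-(j+(-1)) = (N:ℤ)+1-j by ring,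
          show (N:ℤ)+(j+(-1)) = (N:ℤ)+(j-1) by ring]
      have h3' : ∀ i : ℤ, eps (i+1) * X ^ (E m c (i+1)) *
            (X ^ (m * (((N:ℤ)-i).toNat)) * gb m (2*N) ((N:ℤ)+i))
          = -(X ^ (m*N+(m-c))) * term m c N i := by
        intro i
        rcases eq_or_ne (gb m (2*N) ((N:ℤ)+i)) 0 with hz | hz
        · rw [term, hz]; ring
        · have hb := gb_zero_iff m (2*N) _ hz
          have hb2 : -(N:ℤ) ≤ i ∧ i ≤ (N:ℤ) := by
            constructor <;> [skip; skip] <;> (push_cast at hb; omega)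
          have hNi : ((((N:ℤ)-i).toNat : ℕ) : ℤ) = (N:ℤ)-i := Int.toNat_of_nonneg (by omega)
          have hgoal : E m c (i+1) + m * (((N:ℤ)-i).toNat) = E m c i + (m*N + (m-c)) := by
            have hcast2 : ((E m c (i+1) + m * (((N:ℤ)-i).toNat) : ℕ) : ℤ)
                = ((E m c i + (m*N + (m-c)) : ℕ) : ℤ) := by
              push_cast [E_cast m c hcm, hNi, Nat.cast_sub hcm.le]
              rw [eInt_up]
              push_cast
              ring
            exact_mod_cast hcast2
          calc eps (i+1) * X ^ (E m c (i+1)) *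
                (X ^ (m * (((N:ℤ)-i).toNat)) * gb m (2*N) ((N:ℤ)+i))
              = -(X ^ (E m c (i+1) + m * (((N:ℤ)-i).toNat)) * (eps i * gb m (2*N) ((N:ℤ)+i))) := by
                rw [eps_up, pow_add]; ring
            _ = -(X ^ (E m c i + (m*N+(m-c))) * (eps i * gb m (2*N) ((N:ℤ)+i))) := by rw [hgoal]
            _ = -(X ^ (m*N+(m-c))) * term m c N i := by rw [term, pow_add]; ring
      have hsum3 : ∑ j ∈ Finset.Icc (-((N:ℤ)+1)) ((N:ℤ)+1),
            eps j * X ^ (E m c j) *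
              (X ^ (m * (((N:ℤ)+1-j).toNat)) * gb m (2*N) ((N:ℤ)+(j-1)))
          = -(X ^ (m*N+(m-c))) * Pside m c N := by
        rw [Finset.sum_congr rfl (fun j _ => e3 j),
          show -((N:ℤ)+1) = -(N:ℤ)-1 by ring,
          sum_shift (-(N:ℤ)-1) ((N:ℤ)+1) (-1) (fun i => eps (i+1) * X ^ (E m c (i+1)) *
              (X ^ (m * (((N:ℤ)-i).toNat)) * gb m (2*N) ((N:ℤ)+i)))]
        rw [show -(N:ℤ)-1+(-1) = -(N:ℤ)-2 by ring, show (N:ℤ)+1+(-1) = (N:ℤ) by ring]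
        rw [Finset.sum_congr rfl (fun i _ => h3' i), ← Finset.mul_sum]
        rw [sum_term_ext m c N _ (Finset.Icc_subset_Icc (by omega) (by omega)), ← ih]
      -- Sum 4
      have h4 : ∀ j : ℤ, eps j * X ^ (E m c j) *
            (X ^ (m * (((N:ℤ)+1-j).toNat)) *
              (X ^ (m * (((N:ℤ)+j).toNat)) * gb m (2*N) ((N:ℤ)+j)))
          = X ^ (m*(2*N+1)) * term m c N j := by
        intro j
        rcases eq_or_ne (gb m (2*N) ((N:ℤ)+j)) 0 with hz | hz
        · rw [term, hz]; ring
        · have hb := gb_zero_iff m (2*N) _ hz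
          have hb2 : -(N:ℤ) ≤ j ∧ j ≤ (N:ℤ) := by
            constructor <;> [skip; skip] <;> (push_cast at hb; omega)
          have hexp : m * (((N:ℤ)+1-j).toNat) + m * (((N:ℤ)+j).toNat) = m*(2*N+1) := by
            rw [← Nat.left_distrib]
            congr 1
            omega
          calc eps j * X ^ (E m c j) *
                (X ^ (m * (((N:ℤ)+1-j).toNat)) *
                  (X ^ (m * (((N:ℤ)+j).toNat)) * gb m (2*N) ((N:ℤ)+j)))
              = X ^ (m * (((N:ℤ)+1-j).toNat) + m * (((N:ℤ)+j).toNat)) *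
                  (eps j * X ^ (E m c j) * gb m (2*N) ((N:ℤ)+j)) := by rw [pow_add]; ring
            _ = X ^ (m*(2*N+1)) * term m c N j := by rw [hexp, term]
      have hsum4 : ∑ j ∈ Finset.Icc (-((N:ℤ)+1)) ((N:ℤ)+1),
            eps j * X ^ (E m c j) *
              (X ^ (m * (((N:ℤ)+1-j).toNat)) *
                (X ^ (m * (((N:ℤ)+j).toNat)) * gb m (2*N) ((N:ℤ)+j)))
          = X ^ (m*(2*N+1)) * Pside m c N := by
        rw [Finset.sum_congr rfl (fun j _ => h4 j), ← Finset.mul_sum]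
        rw [sum_term_ext m c N _ (Finset.Icc_subset_Icc (by omega) (by omega)), ← ih]
      rw [hsum1, hsum2, hsum3, hsum4]
      -- combine
      rw [Pside, Finset.prod_range_succ, ← Pside]
      rw [show m*(N+1) - c = m*N + (m-c) by rw [Nat.mul_succ]; omega,
        show m*(N+1) - (m-c) = m*N + c by rw [Nat.mul_succ]; omega]
      have hE4 : (m*N+(m-c)) + (m*N+c) = m*(2*N+1) := by
        have h5 : m*(2*N+1) = 2*(m*N)+m := by ring
        omega
      rw [show (X:PowerSeries ℤ)^(m*(2*N+1)) = X^(m*N+(m-c)) * X^(m*N+c) from by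
        rw [← pow_add, hE4]]
      ring

lemma coeff_termF (m c : ℕ) (hc : 0 < c) (hcm : c < m) (n : ℕ) (j : ℤ)
    (hj : j.natAbs ≤ n+1) :
    (coeff n) (term m c (n+1) j * F m (n+1))
      = if eInt m c j = (n:ℤ) then (if Even j then (1:ℤ) else -1) else 0 := by
  have hd := gbF_dvd m (by omega) (n+1) j hj
  have hsplit : term m c (n+1) j * F m (n+1)
      = eps j * X ^ (E m c j)
        + eps j * (X ^ (E m c j) *
            (gb m (2*(n+1)) (((n+1:ℕ):ℤ) + j) * F m (n+1) - 1)) := by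
    rw [term]; ring
  rw [hsplit, map_add]
  have hcoeff2 : coeff n (eps j * (X ^ (E m c j) *
      (gb m (2*(n+1)) (((n+1:ℕ):ℤ) + j) * F m (n+1) - 1))) = 0 := by
    have hdvd : (X:PowerSeries ℤ) ^ (E m c j + m * ((n+1) - j.natAbs + 1)) ∣
        eps j * (X ^ (E m c j) *
          (gb m (2*(n+1)) (((n+1:ℕ):ℤ) + j) * F m (n+1) - 1)) := by
      rw [pow_add]
      exact Dvd.dvd.mul_left (mul_dvd_mul (dvd_refl _) hd) (eps j)
    have ht : j.natAbs ≤ E m c j := by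
      have h1 := natAbs_le_eInt m c hc hcm j
      have h2 := E_cast m c hcm j
      omega
    have hn : n < E m c j + m * ((n+1) - j.natAbs + 1) := by
      have hK : ((n+1) - j.natAbs + 1) ≤ m * ((n+1) - j.natAbs + 1) :=
        Nat.le_mul_of_pos_left _ (by omega)
      set M := m * ((n+1) - j.natAbs + 1) with hM
      omega
    rw [PowerSeries.X_pow_dvd_iff] at hdvd
    exact hdvd n hn
  rw [hcoeff2, add_zero]
  have heps : eps j = PowerSeries.C (if Even j then (1:ℤ) else -1) := by
    by_cases h : Even j <;> simp [eps, h]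
  rw [heps, PowerSeries.coeff_C_mul, PowerSeries.coeff_X_pow]
  by_cases he : eInt m c j = (n:ℤ)
  · have hE : n = E m c j := by have := E_cast m c hcm j; omega
    rw [if_pos he, if_pos hE, mul_one]
  · have hE : ¬ (n = E m c j) := by have := E_cast m c hcm j; omega
    rw [if_neg he, if_neg hE, mul_zero]

theorem main (m c : ℕ) (hc : 0 < c) (hcm : c < m) :
    (PowerSeries.mk fun n =>
        ∑' j : ℤ, if ((m : ℤ) - c) * (j * (j + 1) / 2) + (c : ℤ) * (j * (j - 1) / 2) = (n : ℤ)
          then (if Even j then (1 : ℤ) else -1) else 0) =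
      iprod' (fun k => (1 - (X : PowerSeries ℤ) ^ (m * (k + 1) - c)) *
        (1 - (X : PowerSeries ℤ) ^ (m * (k + 1) - (m - c))) *
        (1 - (X : PowerSeries ℤ) ^ (m * (k + 1)))) := by
  ext n
  rw [PowerSeries.coeff_mk, iprod', PowerSeries.coeff_mk]
  have hprod : (∏ k ∈ Finset.range (n+1),
        ((1 - (X:PowerSeries ℤ) ^ (m*(k+1) - c)) * (1 - X ^ (m*(k+1) - (m-c)))
          * (1 - X ^ (m*(k+1)))))
      = Pside m c (n+1) * F m (n+1) := by
    rw [Finset.prod_mul_distrib]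
    rfl
  rw [hprod, key m c hc hcm (n+1), Finset.sum_mul, map_sum]
  have hIcc : ∀ j ∈ Finset.Icc (-((n+1:ℕ):ℤ)) ((n+1:ℕ):ℤ),
      (coeff n) (term m c (n+1) j * F m (n+1))
        = if eInt m c j = (n:ℤ) then (if Even j then (1:ℤ) else -1) else 0 := by
    intro j hj
    rw [Finset.mem_Icc] at hj
    exact coeff_termF m c hc hcm n j (by omega)
  rw [Finset.sum_congr rfl hIcc]
  have := tsum_eq_sum (L := SummationFilter.unconditional ℤ) (s := Finset.Icc (-((n+1:ℕ):ℤ)) ((n+1:ℕ):ℤ))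
    (f := fun j : ℤ => if eInt m c j = (n:ℤ) then (if Even j then (1:ℤ) else -1) else 0) ?_
  · exact this
  · intro j hj
    rw [Finset.mem_Icc] at hj
    push_neg at hj
    show (if eInt m c j = (n:ℤ) then (if Even j then (1:ℤ) else -1) else 0) = 0
    rw [if_neg]
    intro he
    have h1 := natAbs_le_eInt m c hc hcm j
    rw [he] at h1
    omega

end JTP

/-- The infinite product `∏_{k ≥ 0} f k` of formal power series, in the situation where the
`k`-th factor is `1 + (multiple of X^(k+1))`: the coefficient of `X^n` in the product is then
the (stable) coefficient of `X^n` in any partial product containing at least the first `n + 1`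
factors. -/
noncomputable def iprod (f : ℕ → PowerSeries ℤ) : PowerSeries ℤ :=
  PowerSeries.mk fun n => PowerSeries.coeff n (∏ k ∈ Finset.range (n + 1), f k)

/-- For integers `m ≥ 1` and `0 < c < m`, as formal power series over `ℤ`,
`∑_{j ∈ ℤ} (-1)^j X^{(m-c)·j(j+1)/2 + c·j(j-1)/2}
  = ∏_{k ≥ 1} (1 - X^{mk-c})(1 - X^{mk-(m-c)})(1 - X^{mk})`,
where the left-hand side is the series whose coefficient of `X^n` is the sum of `(-1)^j`
over the (finitely many) integers `j` with `(m-c)·j(j+1)/2 + c·j(j-1)/2 = n`. -/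
theorem stmt16 (m c : ℕ) (hc : 0 < c) (hcm : c < m) :
    (PowerSeries.mk fun n =>
        ∑' j : ℤ, if ((m : ℤ) - c) * (j * (j + 1) / 2) + (c : ℤ) * (j * (j - 1) / 2) = (n : ℤ)
          then (if Even j then (1 : ℤ) else -1) else 0) =
      iprod (fun k => (1 - (X : PowerSeries ℤ) ^ (m * (k + 1) - c)) *
        (1 - (X : PowerSeries ℤ) ^ (m * (k + 1) - (m - c))) *
        (1 - (X : PowerSeries ℤ) ^ (m * (k + 1)))) :=
  JTP.main m c hc hcm
end

section
/- As formal power series over ℤ, ∏_{k≥1} (1 − X^k) = ( ∑_{j∈ℤ} (−1)^j X^{j²} ) · ∏_{k≥1} (1 + X^k); that is, (X;X)_∞ = φ(−X) · (−X;X)_∞, where φ(−X) = 1 + 2∑_{j≥1} (−1)^j X^{j²}. -/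
open PowerSeries

noncomputable section StmtAux

abbrev PS := PowerSeries ℤ

/-- Gaussian binomial `[m choose k]` in the variable `Q = X^2`. -/
def qb : ℕ → ℕ → PS
  | 0, 0 => 1
  | 0, _+1 => 0
  | _+1, 0 => 1
  | m+1, k+1 => qb m k + X^(2*(k+1)) * qb m (k+1)

@[simp] lemma qb_zero_succ (k : ℕ) : qb 0 (k+1) = 0 := rfl
lemma qb_succ_succ (m k : ℕ) : qb (m+1) (k+1) = qb m k + X^(2*(k+1)) * qb m (k+1) := rfl

@[simp] lemma qb_zero_right (m : ℕ) : qb m 0 = 1 := by cases m <;> rfl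

lemma qb_big : ∀ m k, m < k → qb m k = 0 := by
  intro m
  induction m with
  | zero => intro k hk; obtain ⟨k, rfl⟩ := Nat.exists_eq_add_of_lt hk; simp [Nat.add_comm]
  | succ m ih =>
      intro k hk
      obtain ⟨k, rfl⟩ : ∃ k', k = k' + 1 := ⟨k - 1, by omega⟩
      rw [qb_succ_succ, ih k (by omega), ih (k+1) (by omega)]
      ring

@[simp] lemma qb_diag : ∀ m, qb m m = 1 := by
  intro m
  induction m with
  | zero => rfl
  | succ m ih => rw [qb_succ_succ, ih, qb_big m (m+1) (by omega)]; ring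

/-- Second Pascal rule. -/
lemma qb_pascal2 : ∀ m k, qb (m+1) (k+1) = X^(2*(m-k)) * qb m k + qb m (k+1) := by
  intro m
  induction m with
  | zero =>
      intro k
      cases k with
      | zero => simp [qb_succ_succ]
      | succ k => rw [qb_succ_succ]; simp [qb_big 1 (k+2) (by omega)]
  | succ m ih =>
      intro k
      cases k with
      | zero =>
          rw [show m+1-0 = m+1 by omega]
          conv_lhs => rw [qb_succ_succ, ih 0]
          conv_rhs => rw [qb_succ_succ m 0]
          rw [show m-0 = m by omega]
          simp only [qb_zero_right]
          ring
      | succ k =>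
          rcases Nat.lt_or_ge m k with hmk | hmk
          · rw [qb_succ_succ, qb_big (m+1) (k+1) (by omega), qb_big (m+1) (k+2) (by omega)]
            simp
          rcases Nat.eq_or_lt_of_le hmk with heq | hlt
          · subst heq
            rw [qb_succ_succ, qb_diag, qb_big (k+1) (k+2) (by omega),
              show k+1-(k+1) = 0 by omega]
            simp
          · obtain ⟨s, rfl⟩ : ∃ s, m = k + s + 1 := ⟨m - k - 1, by omega⟩
            have hA1 : qb (k+s+1+1) (k+1) = qb (k+s+1) k + X^(2*(k+1)) * qb (k+s+1) (k+1) :=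
              qb_succ_succ _ k
            have hA2 : qb (k+s+1+1) (k+1) = X^(2*(s+1)) * qb (k+s+1) k + qb (k+s+1) (k+1) := by
              have := ih k; rwa [show k+s+1-k = s+1 by omega] at this
            have hB1 : qb (k+s+1+1) (k+2) = qb (k+s+1) (k+1) + X^(2*(k+2)) * qb (k+s+1) (k+2) :=
              qb_succ_succ _ (k+1)
            have hB2 : qb (k+s+1+1) (k+2) = X^(2*s) * qb (k+s+1) (k+1) + qb (k+s+1) (k+2) := by
              have := ih (k+1); rwa [show k+s+1-(k+1) = s by omega] at this
            rw [qb_succ_succ, show k+s+1+1-(k+1) = s+1 by omega]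
            linear_combination (-(X:PS)^(2*(s+1))) * hA1 + hA2 - hB1 + (X:PS)^(2*(k+2)) * hB2


lemma qb_key (m j : ℕ) :
    qb (m+2) (j+2) =
      X^(2*(m-j)) * qb m j + (1 + X^(2*(m+1))) * qb m (j+1) + X^(2*(j+2)) * qb m (j+2) := by
  rcases Nat.lt_or_ge m j with h | h
  · rw [qb_big (m+2) (j+2) (by omega), qb_big m j (by omega), qb_big m (j+1) (by omega),
      qb_big m (j+2) (by omega)]
    ring
  rcases Nat.eq_or_lt_of_le h with heq | hlt
  · subst heq
    rw [show j-j = 0 by omega, qb_diag, qb_diag j, qb_big j (j+1) (by omega),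
      qb_big j (j+2) (by omega)]
    ring
  · obtain ⟨s, rfl⟩ : ∃ s, m = j + s + 1 := ⟨m - j - 1, by omega⟩
    have h1 : qb (j+s+1+2) (j+2) = qb (j+s+2) (j+1) + X^(2*(j+2)) * qb (j+s+2) (j+2) :=
      qb_succ_succ _ _
    have h2 : qb (j+s+2) (j+1) = X^(2*(s+1)) * qb (j+s+1) j + qb (j+s+1) (j+1) := by
      have := qb_pascal2 (j+s+1) j; rwa [show j+s+1-j = s+1 by omega] at this
    have h3 : qb (j+s+2) (j+2) = X^(2*s) * qb (j+s+1) (j+1) + qb (j+s+1) (j+2) := by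
      have := qb_pascal2 (j+s+1) (j+1); rwa [show j+s+1-(j+1) = s by omega] at this
    rw [show j+s+1-j = s+1 by omega]
    linear_combination h1 + h2 + (X:PS)^(2*(j+2)) * h3

/-- partial products of `(q²;q²)_n`. -/
def Pp (n : ℕ) : PS := ∏ i ∈ Finset.range n, (1 - X^(2*i+2))

@[simp] lemma Pp_zero : Pp 0 = 1 := rfl
lemma Pp_succ (n : ℕ) : Pp (n+1) = Pp n * (1 - X^(2*n+2)) := Finset.prod_range_succ _ n

lemma qb_prod : ∀ m k, k ≤ m → qb m k * (Pp k * Pp (m-k)) = Pp m := by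
  intro m
  induction m with
  | zero => intro k hk; interval_cases k; simp [qb_diag]
  | succ m ih =>
      intro k hk
      cases k with
      | zero => simp [qb_zero_right]
      | succ k =>
          rcases Nat.eq_or_lt_of_le hk with heq | hlt
          · have hkm : k + 1 = m + 1 := heq
            obtain rfl : k = m := by omega
            rw [qb_diag, show k+1-(k+1) = 0 by omega]
            simp
          · obtain ⟨t, rfl⟩ : ∃ t, m = k + t + 1 := ⟨m - k - 1, by omega⟩
            have e1 : qb (k+t+1) k * (Pp k * (Pp t * (1 - X^(2*t+2)))) = Pp (k+t+1) := by
              have := ih k (by omega)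
              rwa [show k+t+1-k = t+1 by omega, Pp_succ] at this
            have e2 : qb (k+t+1) (k+1) * ((Pp k * (1 - X^(2*k+2))) * Pp t) = Pp (k+t+1) := by
              have := ih (k+1) (by omega)
              rwa [show k+t+1-(k+1) = t by omega, Pp_succ] at this
            rw [qb_succ_succ, show k+t+1+1-(k+1) = t+1 by omega, Pp_succ t, Pp_succ k,
              Pp_succ (k+t+1)]
            linear_combination (1 - (X:PS)^(2*k+2)) * e1 +
              ((X:PS)^(2*(k+1)) * (1 - (X:PS)^(2*t+2))) * e2

def Op (n : ℕ) : PS := ∏ i ∈ Finset.range n, (1 - X^(2*i+1))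

/-- `(j - n)^2` for naturals. -/
def sqd (n j : ℕ) : ℕ := ((j - n) + (n - j))^2

lemma sqd_cast (n j : ℕ) : (sqd n j : ℤ) = ((j:ℤ) - n)^2 := by
  unfold sqd
  rcases le_total j n with h | h
  · have h0 : j - n = 0 := by omega
    have h1 : ((n - j : ℕ) : ℤ) = (n:ℤ) - j := by omega
    rw [h0]
    push_cast [h1]
    ring
  · have h0 : n - j = 0 := by omega
    have h1 : ((j - n : ℕ) : ℤ) = (j:ℤ) - n := by omega
    rw [h0]
    push_cast [h1]
    ring

lemma pow_shift (A : PS) (p q r s : ℕ) (h : p + q = r + s) :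
    X^p * A * X^q = X^r * (A * X^s) := by
  calc X^p * A * X^q = X^(p+q) * A := by rw [pow_add]; ring
  _ = X^(r+s) * A := by rw [h]
  _ = X^r * (A * X^s) := by rw [pow_add]; ring

def Sfin (n : ℕ) : PS :=
  ∑ j ∈ Finset.range (2*n+1), (-1:PS)^j * (qb (2*n) j * X^(sqd n j))

lemma shiftS (d : ℕ → PS) : ∀ t : ℕ,
    (∑ j ∈ Finset.range (t+1), (-1:PS)^j * d (j+1))
      = d 0 - (∑ j ∈ Finset.range (t+1), (-1:PS)^j * d j) + (-1:PS)^t * d (t+1) := by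
  intro t
  induction t with
  | zero => simp
  | succ t ih =>
      rw [Finset.sum_range_succ (fun j => (-1:PS)^j * d (j+1)) (t+1),
        Finset.sum_range_succ (fun j => (-1:PS)^j * d j) (t+1), ih]
      ring

lemma Sfin_succ (n : ℕ) :
    Sfin (n+1) = (2*X^(2*n+1) - 1 - X^(2*(2*n+1))) * Sfin n := by
  classical
  have hz1 : qb (2*n) (2*n+1) = 0 := qb_big _ _ (by omega)
  have hz2 : qb (2*n) (2*n+2) = 0 := qb_big _ _ (by omega)
  -- three key per-slot identities
  have key2 : ∀ j, j ≤ 2*n → qb (2*n+2) (j+2) * X^(sqd (n+1) (j+2)) =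
      X^(2*n+1) * (qb (2*n) (j+2) * X^(sqd n (j+2)))
      + (1 + X^(2*(2*n+1))) * (qb (2*n) (j+1) * X^(sqd n (j+1)))
      + X^(2*n+1) * (qb (2*n) j * X^(sqd n j)) := by
    intro j hj
    have e1 : 2*(2*n-j) + sqd (n+1) (j+2) = (2*n+1) + sqd n j := by
      zify [hj, sqd_cast]; push_cast; ring
    have e2 : sqd (n+1) (j+2) = sqd n (j+1) := by
      have : (sqd (n+1) (j+2) : ℤ) = (sqd n (j+1) : ℤ) := by
        rw [sqd_cast, sqd_cast]; push_cast; ring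
      exact_mod_cast this
    have e3 : 2*(j+2) + sqd (n+1) (j+2) = (2*n+1) + sqd n (j+2) := by
      zify [sqd_cast]; push_cast; ring
    rw [qb_key (2*n) j, add_mul, add_mul,
      pow_shift (qb (2*n) j) _ _ _ _ e1,
      pow_shift (qb (2*n) (j+2)) _ _ _ _ e3]
    rw [e2, mul_assoc]
    ring
  have hf1 : qb (2*n+2) 1 * X^(sqd (n+1) 1) =
      X^(2*n+1) * (qb (2*n) 1 * X^(sqd n 1))
      + (1 + X^(2*(2*n+1))) * (qb (2*n) 0 * X^(sqd n 0)) := by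
    have hp2 : qb (2*n+1) 1 = X^(2*(2*n)) * qb (2*n) 0 + qb (2*n) 1 := by
      have := qb_pascal2 (2*n) 0
      rwa [show 2*n-0 = 2*n by omega] at this
    have hq1 : qb (2*n+2) 1 = 1 + X^2 * (X^(2*(2*n)) * qb (2*n) 0 + qb (2*n) 1) := by
      rw [show 2*n+2 = (2*n+1)+1 by ring, qb_succ_succ (2*n+1) 0, qb_zero_right, ← hp2]
      try norm_num
    have e4 : 2 + sqd (n+1) 1 = (2*n+1) + sqd n 1 := by
      zify [sqd_cast]; push_cast; ring
    have e5 : sqd (n+1) 1 = sqd n 0 := by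
      have : (sqd (n+1) 1 : ℤ) = (sqd n 0 : ℤ) := by rw [sqd_cast, sqd_cast]; push_cast; ring
      exact_mod_cast this
    have e6 : (2*(2*n) + 2) + sqd (n+1) 1 = 2*(2*n+1) + sqd n 0 := by
      zify [sqd_cast]; push_cast; ring
    have q1 : (X:PS)^2 * X^(sqd (n+1) 1) = X^(2*n+1) * X^(sqd n 1) := by
      rw [← pow_add, ← pow_add, e4]
    have q2 : (X:PS)^(sqd (n+1) 1) = X^(sqd n 0) := by rw [e5]
    have q3 : (X:PS)^(2*(2*n)) * ((X:PS)^2 * X^(sqd (n+1) 1)) = X^(2*(2*n+1)) * X^(sqd n 0) := by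
      rw [← pow_add, ← pow_add, show 2*(2*n) + (2 + sqd (n+1) 1) = 2*(2*n+1) + sqd n 0 by omega]
      rw [pow_add]
    rw [hq1, qb_zero_right]
    linear_combination (qb (2*n) 1) * q1 + q2 + q3
  have hf0 : qb (2*n+2) 0 * X^(sqd (n+1) 0) =
      X^(2*n+1) * (qb (2*n) 0 * X^(sqd n 0)) := by
    rw [qb_zero_right, qb_zero_right]
    have e7 : sqd (n+1) 0 = (2*n+1) + sqd n 0 := by
      zify [sqd_cast]; push_cast; ring
    rw [e7, pow_add]; ring
  -- expand the sum
  have hexp : Sfin (n+1) =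
      (∑ j ∈ Finset.range (2*n+1),
        ((-1:PS)^j * (qb (2*n+2) (j+2) * X^(sqd (n+1) (j+2)))))
      + (-(qb (2*n+2) 1 * X^(sqd (n+1) 1)) + qb (2*n+2) 0 * X^(sqd (n+1) 0)) := by
    show (∑ j ∈ Finset.range (2*(n+1)+1), (-1:PS)^j * (qb (2*(n+1)) j * X^(sqd (n+1) j))) = _
    rw [show 2*(n+1)+1 = (2*n+2)+1 by ring]
    rw [Finset.sum_range_succ' (fun j => (-1:PS)^j * (qb (2*(n+1)) j * X^(sqd (n+1) j))) (2*n+2),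
      Finset.sum_range_succ' (fun j => (-1:PS)^(j+1) * (qb (2*(n+1)) (j+1) * X^(sqd (n+1) (j+1)))) (2*n+1)]
    have h2 : (2:ℕ)*(n+1) = 2*n+2 := by ring
    rw [h2]
    have hsum : (∑ j ∈ Finset.range (2*n+1),
          (-1:PS)^(j+1+1) * (qb (2*n+2) (j+1+1) * X^(sqd (n+1) (j+1+1)))) =
        ∑ j ∈ Finset.range (2*n+1), (-1:PS)^j * (qb (2*n+2) (j+2) * X^(sqd (n+1) (j+2))) := by
      apply Finset.sum_congr rfl
      intro j hj
      have hs : (-1:PS)^(j+1+1) = (-1:PS)^j := by rw [pow_add, pow_add]; ring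
      rw [hs]
    rw [hsum]
    norm_num
    ring
  -- rewrite each summand with key2 and distribute
  have hexp2 : (∑ j ∈ Finset.range (2*n+1),
        ((-1:PS)^j * (qb (2*n+2) (j+2) * X^(sqd (n+1) (j+2))))) =
      X^(2*n+1) * (∑ j ∈ Finset.range (2*n+1), (-1:PS)^j * (qb (2*n) (j+2) * X^(sqd n (j+2))))
      + (1 + X^(2*(2*n+1))) * (∑ j ∈ Finset.range (2*n+1), (-1:PS)^j * (qb (2*n) (j+1) * X^(sqd n (j+1))))
      + X^(2*n+1) * (∑ j ∈ Finset.range (2*n+1), (-1:PS)^j * (qb (2*n) j * X^(sqd n j))) := by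
    rw [Finset.mul_sum, Finset.mul_sum, Finset.mul_sum, ← Finset.sum_add_distrib,
      ← Finset.sum_add_distrib]
    apply Finset.sum_congr rfl
    intro j hj
    have hj' : j ≤ 2*n := by
      have := Finset.mem_range.mp hj; omega
    rw [key2 j hj']
    ring
  have hS1 : (∑ j ∈ Finset.range (2*n+1), (-1:PS)^j * (qb (2*n) (j+1) * X^(sqd n (j+1)))) =
      qb (2*n) 0 * X^(sqd n 0) - Sfin n := by
    have := shiftS (fun j => qb (2*n) j * X^(sqd n j)) (2*n)
    rw [this, hz1]
    unfold Sfin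
    ring
  have hS2 : (∑ j ∈ Finset.range (2*n+1), (-1:PS)^j * (qb (2*n) (j+2) * X^(sqd n (j+2)))) =
      qb (2*n) 1 * X^(sqd n 1)
      - (∑ j ∈ Finset.range (2*n+1), (-1:PS)^j * (qb (2*n) (j+1) * X^(sqd n (j+1)))) := by
    have := shiftS (fun j => qb (2*n) (j+1) * X^(sqd n (j+1))) (2*n)
    rw [this, hz2]
    ring
  rw [hexp, hexp2, hS2, hS1, hf1, hf0]
  unfold Sfin
  ring

lemma md_mul {N : ℕ} {A B C D : PS} (h1 : X^N ∣ A - B) (h2 : X^N ∣ C - D) :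
    X^N ∣ A*C - B*D := by
  have h : A*C - B*D = (A - B)*C + B*(C - D) := by ring
  rw [h]
  exact dvd_add (h1.mul_right C) (h2.mul_left B)

lemma md_prod_one {N : ℕ} (s : Finset ℕ) (f : ℕ → PS) (h : ∀ i ∈ s, X^N ∣ f i - 1) :
    X^N ∣ (∏ i ∈ s, f i) - 1 := by
  classical
  induction s using Finset.cons_induction with
  | empty => simp
  | cons a s ha ih =>
      rw [Finset.prod_cons]
      have h1 := h a (Finset.mem_cons_self a s)
      have h2 := ih (fun i hi => h i (Finset.mem_cons_of_mem hi))
      have h3 := md_mul h1 h2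
      simpa using h3

lemma md_sum {N : ℕ} (s : Finset ℕ) (f g : ℕ → PS) (h : ∀ i ∈ s, X^N ∣ f i - g i) :
    X^N ∣ (∑ i ∈ s, f i) - ∑ i ∈ s, g i := by
  rw [← Finset.sum_sub_distrib]
  exact Finset.dvd_sum h

lemma coeff_eq_of_dvd {N : ℕ} {A : PS} (h : X^(N+1) ∣ A) {i : ℕ} (hi : i ≤ N) :
    coeff i A = 0 := X_pow_dvd_iff.mp h i (by omega)

lemma dvd_of_coeff {N : ℕ} {A : PS} (h : ∀ i, i ≤ N → coeff i A = 0) : X^(N+1) ∣ A :=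
  X_pow_dvd_iff.mpr fun m hm => h m (by omega)

lemma eqP {A B : PS} (h : ∀ N, X^(N+1) ∣ A - B) : A = B := by
  ext i
  have h2 := X_pow_dvd_iff.mp (h i) i (by omega)
  rw [map_sub, sub_eq_zero] at h2
  exact h2

lemma isUnit_of_constant_one {A : PS} (h : constantCoeff A = 1) : IsUnit A := by
  rw [PowerSeries.isUnit_iff_constantCoeff, h]
  exact isUnit_one

lemma md_cancel {N : ℕ} {U A : PS} (hU : IsUnit U) (h : X^N ∣ U * A) : X^N ∣ A := by
  obtain ⟨V, hV⟩ := hU.exists_left_inv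
  have hA : A = V * (U * A) := by rw [← mul_assoc, hV, one_mul]
  rw [hA]
  exact h.mul_left V

lemma const_one_sub (k : ℕ) (hk : 0 < k) : constantCoeff (1 - X^k : PS) = 1 := by
  rw [map_sub, map_one, map_pow, constantCoeff_X, zero_pow (by omega), sub_zero]

lemma const_one_add (k : ℕ) (hk : 0 < k) : constantCoeff (1 + X^k : PS) = 1 := by
  rw [map_add, map_one, map_pow, constantCoeff_X, zero_pow (by omega), add_zero]

lemma constPp (n : ℕ) : constantCoeff (Pp n) = 1 := by
  unfold Pp
  rw [map_prod]
  rw [Finset.prod_congr rfl (fun i _ => const_one_sub (2*i+2) (by omega))]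
  simp

lemma Pp_ne_zero (n : ℕ) : Pp n ≠ 0 := by
  intro h
  have := constPp n
  rw [h, map_zero] at this
  exact absurd this (by norm_num)

lemma Pp_add (a t : ℕ) :
    Pp (a + t) = Pp a * ∏ k ∈ Finset.range t, (1 - X^(2*(a+k)+2)) := by
  unfold Pp
  rw [Finset.prod_range_add]

lemma Pp_tail (a t N : ℕ) (h : N + 1 ≤ 2*a+2) :
    X^(N+1) ∣ (∏ k ∈ Finset.range t, ((1:PS) - X^(2*(a+k)+2))) - 1 := by
  apply md_prod_one
  intro i _
  have h1 : (1 - X^(2*(a+i)+2)) - 1 = -(X^(2*(a+i)+2) : PS) := by ring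
  rw [h1]
  exact (dvd_trans (pow_dvd_pow X (by omega)) (dvd_neg.mpr dvd_rfl))

lemma iprod_approx (f : ℕ → PS) (hf : ∀ k, X^(k+1) ∣ f k - 1) (N M : ℕ) (hM : N + 1 ≤ M) :
    X^(N+1) ∣ iprod f - ∏ k ∈ Finset.range M, f k := by
  apply dvd_of_coeff
  intro i hi
  rw [map_sub]
  have h1 : coeff i (iprod f) = coeff i (∏ k ∈ Finset.range (i+1), f k) := coeff_mk _ _
  obtain ⟨t, rfl⟩ : ∃ t, M = (i+1) + t := ⟨M - (i+1), by omega⟩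
  rw [Finset.prod_range_add]
  have htail : X^(i+1) ∣ (∏ k ∈ Finset.range t, f ((i+1) + k)) - 1 := by
    apply md_prod_one
    intro k _
    exact dvd_trans (pow_dvd_pow X (by omega)) (hf ((i+1)+k))
  have hP : X^(i+1) ∣ (∏ k ∈ Finset.range (i+1), f k) - (∏ k ∈ Finset.range (i+1), f k) := by
    simp
  have h2 := md_mul hP htail
  rw [mul_one] at h2
  have h3 := coeff_eq_of_dvd h2 (le_refl i)
  rw [map_sub] at h3
  rw [h1]
  omega

lemma pq_one (N M j : ℕ) (hj : j ≤ 2*M) (hnear : sqd M j ≤ N) (hM : 2*N+2 ≤ M) :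
    X^(N+1) ∣ Pp M * qb (2*M) j - 1 := by
  have habs : (j - M) + (M - j) ≤ Nat.sqrt N := by
    rw [Nat.le_sqrt]
    have : ((j - M) + (M - j))^2 = sqd M j := rfl
    nlinarith [this]
  have hs : Nat.sqrt N ≤ N := Nat.sqrt_le_self N
  have hjl : M - Nat.sqrt N ≤ j := by omega
  have hju : j ≤ M + Nat.sqrt N := by omega
  set l := min j M with hl
  -- Pp M = Pp l * T1
  obtain ⟨t1, ht1⟩ : ∃ t, M = l + t := ⟨M - l, by omega⟩
  set T1 : PS := ∏ k ∈ Finset.range t1, ((1:PS) - X^(2*(l+k)+2)) with hT1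
  have hPpM : Pp M = Pp l * T1 := by rw [ht1, Pp_add]
  -- Pp j = Pp l * T2
  obtain ⟨t2, ht2⟩ : ∃ t, j = l + t := ⟨j - l, by omega⟩
  set T2 : PS := ∏ k ∈ Finset.range t2, ((1:PS) - X^(2*(l+k)+2)) with hT2
  have hPpj : Pp j = Pp l * T2 := by rw [ht2, Pp_add]
  -- Pp (2M) = Pp (2M - j) * T3
  obtain ⟨t3, ht3⟩ : ∃ t, 2*M = (2*M - j) + t := ⟨j, by omega⟩
  set T3 : PS := ∏ k ∈ Finset.range t3, ((1:PS) - X^(2*((2*M-j)+k)+2)) with hT3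
  have hPp2M : Pp (2*M) = Pp (2*M-j) * T3 := by rw [ht3, Pp_add]; rw [← ht3]
  -- tail congruences
  have hlbig : M - Nat.sqrt N ≤ l := by omega
  have c1 : X^(N+1) ∣ T1 - 1 := Pp_tail l t1 N (by omega)
  have c2 : X^(N+1) ∣ T2 - 1 := Pp_tail l t2 N (by omega)
  have c3 : X^(N+1) ∣ T3 - 1 := Pp_tail (2*M-j) t3 N (by omega)
  -- cancel to get qb * Pp j = T3
  have hqp := qb_prod (2*M) j hj
  have hqbj : qb (2*M) j * Pp j = T3 := by
    have hcan : Pp (2*M-j) * (qb (2*M) j * Pp j) = Pp (2*M-j) * T3 := by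
      calc Pp (2*M-j) * (qb (2*M) j * Pp j) = qb (2*M) j * (Pp j * Pp (2*M-j)) := by ring
        _ = Pp (2*M) := hqp
        _ = Pp (2*M-j) * T3 := hPp2M
    exact mul_left_cancel₀ (Pp_ne_zero _) hcan
  -- combine
  have h2 : T2 * (Pp M * qb (2*M) j) = T1 * T3 := by
    rw [hPpM]
    linear_combination T1 * hqbj - T1 * qb (2*M) j * hPpj
  have e : Pp M * qb (2*M) j - 1 =
      (1 - T2) * (Pp M * qb (2*M) j) + (T1*T3 - 1) := by
    linear_combination h2
  rw [e]
  refine dvd_add ?_ ?_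
  · have : X^(N+1) ∣ (1 - T2) := by
      have := dvd_neg.mpr c2
      simpa using this
    exact this.mul_right _
  · have := md_mul c1 c3
    rw [mul_one] at this
    exact this

def phi : PS := PowerSeries.mk fun n =>
  ∑' j : ℤ, if j ^ 2 = (n : ℤ) then (if Even j then (1 : ℤ) else -1) else 0

lemma phi_approx (N M : ℕ) (hM : N ≤ M) :
    X^(N+1) ∣ phi - ∑ j ∈ Finset.range (2*M+1), (-1:PS)^(j+M) * X^(sqd M j) := by
  apply dvd_of_coeff
  intro i hi
  rw [map_sub]
  rw [show phi = PowerSeries.mk fun n =>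
    ∑' j : ℤ, if j ^ 2 = (n : ℤ) then (if Even j then (1 : ℤ) else -1) else 0 from rfl, coeff_mk]
  -- the tsum is a finite sum over Icc (-M) M
  have hfin : (∑' j : ℤ, if j ^ 2 = (i : ℤ) then (if Even j then (1 : ℤ) else -1) else 0)
      = ∑ j ∈ Finset.Icc (-(M:ℤ)) (M:ℤ),
          (if j ^ 2 = (i : ℤ) then (if Even j then (1 : ℤ) else -1) else 0) := by
    apply tsum_eq_sum
    intro b hb
    rw [Finset.mem_Icc] at hb
    push_neg at hb
    have hb2 : (i:ℤ) < b^2 := by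
      rcases le_or_gt (-(M:ℤ)) b with h1 | h1
      · have h2 := hb h1
        have hi' : (i:ℤ) ≤ M := by exact_mod_cast le_trans (Nat.cast_le.mpr hi) (Nat.cast_le.mpr hM)
        nlinarith
      · have hi' : (i:ℤ) ≤ M := by exact_mod_cast le_trans (Nat.cast_le.mpr hi) (Nat.cast_le.mpr hM)
        nlinarith
    rw [if_neg (by omega)]
  rw [hfin]
  -- coefficient of the finite series
  have hco : coeff i (∑ j ∈ Finset.range (2*M+1), (-1:PS)^(j+M) * X^(sqd M j))
      = ∑ j ∈ Finset.range (2*M+1), (-1:ℤ)^(j+M) * (if i = sqd M j then 1 else 0) := by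
    rw [map_sum]
    apply Finset.sum_congr rfl
    intro j _
    have hC : ((-1:PS))^(j+M) = C ((-1)^(j+M)) := by
      rw [map_pow, map_neg, map_one]
    rw [hC, coeff_C_mul, coeff_X_pow]
  rw [hco]
  rw [sub_eq_zero]
  -- bijection between Icc (-M) M and range (2M+1)
  apply Finset.sum_nbij' (fun c => (c + (M:ℤ)).toNat) (fun j => (j:ℤ) - M)
  · intro c hc
    rw [Finset.mem_Icc] at hc
    rw [Finset.mem_range]
    omega
  · intro j hj
    rw [Finset.mem_range] at hj
    rw [Finset.mem_Icc]
    omega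
  · intro c hc
    rw [Finset.mem_Icc] at hc
    omega
  · intro j hj
    rw [Finset.mem_range] at hj
    omega
  · intro c hc
    rw [Finset.mem_Icc] at hc
    have hcast : (((c + (M:ℤ)).toNat : ℤ)) = c + M := by omega
    have hsq : (sqd M (c + (M:ℤ)).toNat : ℤ) = c^2 := by
      rw [sqd_cast, hcast]; ring
    have hiff : (c^2 = (i:ℤ)) ↔ (i = sqd M (c + (M:ℤ)).toNat) := by
      rw [← hsq]
      constructor
      · intro h; exact_mod_cast h.symm
      · intro h; exact_mod_cast h.symm
    have hsign : (if Even c then (1:ℤ) else -1) = (-1:ℤ)^((c + (M:ℤ)).toNat + M) := by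
      have hpar : Even ((c + (M:ℤ)).toNat + M) ↔ Even c := by
        rw [← Int.even_coe_nat]
        have h2 : (((c + (M:ℤ)).toNat + M : ℕ) : ℤ) = c + 2*M := by push_cast [hcast]; ring
        rw [h2]
        simp [parity_simps]
      by_cases he : Even c
      · rw [if_pos he, (hpar.mpr he).neg_one_pow]
      · rw [if_neg he, Odd.neg_one_pow]
        rw [← Nat.not_even_iff_odd]
        exact fun hcon => he (hpar.mp hcon)
    by_cases h : c^2 = (i:ℤ)
    · rw [if_pos h, if_pos (hiff.mp h), mul_one, hsign]
    · rw [if_neg h, if_neg (fun hh => h (hiff.mpr hh)), mul_zero]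

lemma Op_succ (n : ℕ) : Op (n+1) = Op n * (1 - X^(2*n+1)) := Finset.prod_range_succ _ n
lemma main_fin : ∀ n, Op n ^ 2 = (-1:PS)^n * Sfin n := by
  intro n
  induction n with
  | zero =>
      show Op 0 ^ 2 = (-1:PS)^0 * Sfin 0
      unfold Op Sfin
      simp [sqd]
  | succ n ih =>
      rw [Op_succ, Sfin_succ]
      linear_combination ((1 - (X:PS)^(2*n+1))^2) * ih

lemma parity_split : ∀ M, (∏ k ∈ Finset.range (2*M), ((1:PS) - X^(k+1))) = Pp M * Op M := by
  intro M
  induction M with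
  | zero => simp [Pp, Op]
  | succ M ih =>
      rw [show 2*(M+1) = (2*M+1)+1 by ring, Finset.prod_range_succ, Finset.prod_range_succ, ih,
        Pp_succ, Op_succ]
      ring

lemma pair_prod (K : ℕ) :
    (∏ k ∈ Finset.range K, ((1:PS) - X^(k+1))) * (∏ k ∈ Finset.range K, ((1:PS) + X^(k+1)))
      = Pp K := by
  rw [← Finset.prod_mul_distrib]
  unfold Pp
  apply Finset.prod_congr rfl
  intro k _
  ring

end StmtAux

/-- As formal power series over `ℤ`,
`∏_{k ≥ 1} (1 - X^k) = (∑_{j ∈ ℤ} (-1)^j X^{j²}) · ∏_{k ≥ 1} (1 + X^k)`, i.e.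
`(X;X)_∞ = φ(-X) · (-X;X)_∞`, where `φ(-X) = ∑_{j ∈ ℤ} (-1)^j X^{j²}` is the series whose
coefficient of `X^n` is the sum of `(-1)^j` over the (finitely many) `j ∈ ℤ` with `j² = n`. -/
theorem stmt17 :
    iprod (fun k => 1 - (X : PowerSeries ℤ) ^ (k + 1)) =
      (PowerSeries.mk fun n =>
          ∑' j : ℤ, if j ^ 2 = (n : ℤ) then (if Even j then (1 : ℤ) else -1) else 0) *
        iprod (fun k => 1 + (X : PowerSeries ℤ) ^ (k + 1)) := by
  show iprod _ = phi * iprod _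
  apply eqP
  intro N
  set M : ℕ := 2*N+2 with hMdef
  have hfm : ∀ k, (X:PS)^(k+1) ∣ ((1:PS) - X^(k+1)) - 1 := by
    intro k
    have h : ((1:PS) - X^(k+1)) - 1 = -(X^(k+1)) := by ring
    rw [h]; exact dvd_neg.mpr dvd_rfl
  have hfp : ∀ k, (X:PS)^(k+1) ∣ ((1:PS) + X^(k+1)) - 1 := by
    intro k
    have h : ((1:PS) + X^(k+1)) - 1 = X^(k+1) := by ring
    rw [h]
  have hA := iprod_approx (fun k => 1 - X^(k+1)) hfm N (2*M) (by omega)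
  have hB := iprod_approx (fun k => 1 + X^(k+1)) hfp N (2*M) (by omega)
  set Pm : PS := ∏ k ∈ Finset.range (2*M), ((1:PS) - X^(k+1)) with hPm
  set Pq : PS := ∏ k ∈ Finset.range (2*M), ((1:PS) + X^(k+1)) with hPq
  have hsplit : Pm = Pp M * Op M := parity_split M
  have hpair : Pm * Pq = Pp (2*M) := pair_prod (2*M)
  -- phi ≡ Pp M * Op M ^ 2
  have hphi2 : X^(N+1) ∣ phi - Pp M * Op M^2 := by
    have h1 := phi_approx N M (by omega)
    have hexp : Pp M * Op M^2 =
        ∑ j ∈ Finset.range (2*M+1), (-1:PS)^(j+M) * (Pp M * (qb (2*M) j * X^(sqd M j))) := by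
      rw [main_fin M]
      unfold Sfin
      rw [Finset.mul_sum, Finset.mul_sum]
      apply Finset.sum_congr rfl
      intro j _
      rw [pow_add]
      ring
    have h2 : X^(N+1) ∣ (∑ j ∈ Finset.range (2*M+1), (-1:PS)^(j+M) * X^(sqd M j))
        - Pp M * Op M^2 := by
      rw [hexp]
      apply md_sum
      intro j hj
      rw [Finset.mem_range] at hj
      have hdiff : (-1:PS)^(j+M) * X^(sqd M j) - (-1:PS)^(j+M) * (Pp M * (qb (2*M) j * X^(sqd M j)))
          = ((-1:PS)^(j+M) * X^(sqd M j)) * (1 - Pp M * qb (2*M) j) := by ring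
      rw [hdiff]
      by_cases hs : sqd M j ≤ N
      · have h3 := pq_one N M j (by omega) hs (by omega)
        have h4 : X^(N+1) ∣ (1 - Pp M * qb (2*M) j) := by
          have := dvd_neg.mpr h3
          simpa using this
        exact h4.mul_left _
      · have h5 : (X:PS)^(N+1) ∣ X^(sqd M j) := pow_dvd_pow X (by omega)
        have h6 : ((-1:PS)^(j+M) * X^(sqd M j)) * (1 - Pp M * qb (2*M) j)
            = X^(sqd M j) * ((-1:PS)^(j+M) * (1 - Pp M * qb (2*M) j)) := by ring
        rw [h6]
        exact h5.mul_right _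
    have h7 : phi - Pp M * Op M^2 =
        (phi - ∑ j ∈ Finset.range (2*M+1), (-1:PS)^(j+M) * X^(sqd M j))
        + ((∑ j ∈ Finset.range (2*M+1), (-1:PS)^(j+M) * X^(sqd M j)) - Pp M * Op M^2) := by
      ring
    rw [h7]
    exact dvd_add h1 h2
  -- Pp (2M) ≡ Pp M
  have hPp2M : X^(N+1) ∣ Pp (2*M) - Pp M := by
    have h8 : Pp (2*M) = Pp M * ∏ k ∈ Finset.range M, ((1:PS) - X^(2*(M+k)+2)) := by
      rw [show 2*M = M + M by ring, Pp_add]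
    rw [h8]
    have h9 := Pp_tail M M N (by omega)
    have := md_mul (show X^(N+1) ∣ Pp M - Pp M by simp) h9
    rwa [mul_one] at this
  -- the key multiplied divisibility
  have k1 : X^(N+1) ∣ Pm * (Pm - phi * Pq) := by
    have hq : Pm * (Pm - phi * Pq) =
        Pp M * (Pp M * Op M^2 - phi) + phi * (Pp M - Pp (2*M)) := by
      linear_combination (Pm + Pp M * Op M) * hsplit - phi * hpair
    rw [hq]
    refine dvd_add ?_ ?_
    · have h5 : X^(N+1) ∣ Pp M * Op M^2 - phi := by
        have := dvd_neg.mpr hphi2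
        rwa [neg_sub] at this
      exact h5.mul_left _
    · have h6 : X^(N+1) ∣ Pp M - Pp (2*M) := by
        have := dvd_neg.mpr hPp2M
        rwa [neg_sub] at this
      exact h6.mul_left _
  have hu : IsUnit Pm := by
    apply isUnit_of_constant_one
    rw [hPm, map_prod]
    rw [Finset.prod_congr rfl (fun k _ => const_one_sub (k+1) (by omega))]
    simp
  have k2 : X^(N+1) ∣ Pm - phi * Pq := md_cancel hu k1
  have hfinal : iprod (fun k => (1:PS) - X^(k+1)) - phi * iprod (fun k => (1:PS) + X^(k+1)) =
      ((iprod (fun k => (1:PS) - X^(k+1)) - Pm) - phi * (iprod (fun k => (1:PS) + X^(k+1)) - Pq))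
      + (Pm - phi * Pq) := by ring
  rw [hfinal]
  exact dvd_add (dvd_sub hA (hB.mul_left phi)) k2
end
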